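/- Let Λ be a free ℤ-module of rank g and suppose ℓ₁,…,ℓₙ ∈ Λ^∨ can be extended to a ℤ-basis of Λ^∨ (so n ≤ g). Then there exists a quadratic form Q on Λ^∨ ⊗ ℝ such that: Q is positive definite; Q(ℓ) ∈ ℤ for every ℓ ∈ Λ^∨; Q(ℓ) ≥ 1 for every nonzero ℓ ∈ Λ^∨; and Q(ℓᵢ) = 1 for every i = 1,…,n. (This is the special case of Melo–Viviani's theorem asserting that a matroidal cone generated by at most g rank-one quadratic forms lies in a cone of the perfect cone decomposition, and also in a cone of the central cone decomposition.) -/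

import Mathlib

open TensorProduct

/-- Let `Λ` be a free `ℤ`-module of rank `g` and suppose `ℓ₁, …, ℓₙ ∈ Λ^∨` can be extended
to a `ℤ`-basis of `Λ^∨` (so `n ≤ g`).  Then there exists a quadratic form `Q` on
`Λ^∨ ⊗ ℝ` that is positive definite, takes integer values on `Λ^∨`, takes values `≥ 1` on
every nonzero element of `Λ^∨`, and takes the value `1` on each `ℓᵢ`.  (This is the special
case of the Melo–Viviani theorem asserting that a matroidal cone generated by at most `g`
rank-one quadratic forms lies in a cone of both the perfect and the central cone
decompositions.) -/
theorem basis_extension_gives_perfect_central_form {Λ : Type*} [AddCommGroup Λ]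
    [Module ℤ Λ] {g n : ℕ} (bΛ : Module.Basis (Fin g) ℤ Λ) (hn : n ≤ g)
    (ℓ : Fin n → Module.Dual ℤ Λ)
    (hext : ∃ B : Module.Basis (Fin g) ℤ (Module.Dual ℤ Λ),
        ∀ i : Fin n, B (Fin.castLE hn i) = ℓ i) :
    ∃ Q : QuadraticForm ℝ (ℝ ⊗[ℤ] Module.Dual ℤ Λ),
      (∀ x : ℝ ⊗[ℤ] Module.Dual ℤ Λ, x ≠ 0 → 0 < Q x) ∧
      (∀ v : Module.Dual ℤ Λ, ∃ m : ℤ, Q ((1 : ℝ) ⊗ₜ[ℤ] v) = (m : ℝ)) ∧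
      (∀ v : Module.Dual ℤ Λ, v ≠ 0 → 1 ≤ Q ((1 : ℝ) ⊗ₜ[ℤ] v)) ∧
      (∀ i : Fin n, Q ((1 : ℝ) ⊗ₜ[ℤ] ℓ i) = 1) := by
  obtain ⟨B, hB⟩ := hext
  set bR : Module.Basis (Fin g) ℝ (ℝ ⊗[ℤ] Module.Dual ℤ Λ) := B.baseChange ℝ
  refine ⟨(QuadraticMap.weightedSumSquares ℝ (fun _ : Fin g => (1 : ℝ))).comp
      bR.equivFun.toLinearMap, ?_, ?_, ?_, ?_⟩
  · intro x hx
    have hx' : bR.equivFun x ≠ 0 := fun h => hx (by simpa using bR.equivFun.map_eq_zero_iff.mp h)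
    obtain ⟨j, hj⟩ := Function.ne_iff.mp hx'
    simp only [QuadraticMap.comp_apply, QuadraticMap.weightedSumSquares_apply, one_smul]
    refine Finset.sum_pos' (fun i _ => mul_self_nonneg _) ⟨j, Finset.mem_univ j, ?_⟩
    exact mul_self_pos.mpr (by simpa using hj)
  · intro v
    refine ⟨∑ i, B.repr v i * B.repr v i, ?_⟩
    simp [Module.Basis.equivFun_apply, bR, Module.Basis.baseChange_repr_tmul]
  · intro v hv
    have hv' : B.repr v ≠ 0 := fun h => hv (by simpa using B.repr.map_eq_zero_iff.mp h)
    obtain ⟨j, hj⟩ := Finsupp.ne_iff.mp hv'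
    simp only [QuadraticMap.comp_apply, QuadraticMap.weightedSumSquares_apply, one_smul,
      Module.Basis.equivFun_apply, bR, Module.Basis.baseChange_repr_tmul, smul_eq_mul, mul_one]
    have h1 : (1 : ℤ) ≤ B.repr v j * B.repr v j := by
      nlinarith [Int.one_le_abs (show B.repr v j ≠ 0 by simpa using hj),
        abs_mul_abs_self (B.repr v j)]
    calc (1 : ℝ) ≤ ((B.repr v j : ℤ) : ℝ) * ((B.repr v j : ℤ) : ℝ) := by
          rw [← Int.cast_mul]; exact_mod_cast h1
      _ ≤ ∑ i, ((B.repr v i : ℤ) : ℝ) * ((B.repr v i : ℤ) : ℝ) :=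
          Finset.single_le_sum (f := fun i => ((B.repr v i : ℤ) : ℝ) * ((B.repr v i : ℤ) : ℝ))
            (fun i _ => mul_self_nonneg _) (Finset.mem_univ j)
      _ = ∑ x, 1 * ((bR.equivFun ((1:ℝ) ⊗ₜ[ℤ] v)) x * (bR.equivFun ((1:ℝ) ⊗ₜ[ℤ] v)) x) := by
          simp [Module.Basis.equivFun_apply, bR, Module.Basis.baseChange_repr_tmul]
  · intro i
    simp only [QuadraticMap.comp_apply, QuadraticMap.weightedSumSquares_apply, one_smul,
      Module.Basis.equivFun_apply, bR, Module.Basis.baseChange_repr_tmul, smul_eq_mul, mul_one, ← hB i,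
      Module.Basis.repr_self]
    rw [Finset.sum_eq_single (Fin.castLE hn i)] <;> simp +contextual [Finsupp.single_apply,
      eq_comm]
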